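/- Let W : I₀ → Mat_d(ℂ) be a locally integrable matrix weight on an interval I₀ (positive definite a.e.) and f : I₀ → ℂᵈ with W^{1/2}f ∈ L². Set V = (1/|I₀|)∫_{I₀} W⁻¹(t) dt and 𝐟 = (1/|I₀|)∫_{I₀} f(t) dt. Then ⟨V⁻¹𝐟, 𝐟⟩ ≤ (1/|I₀|)∫_{I₀} ‖W^{1/2}(t)f(t)‖² dt. -/

import Mathlib

open scoped ComplexOrder Matrix

open Matrix MatrixOrder in
lemma matrix_cs_key {d : ℕ} {M : Matrix (Fin d) (Fin d) ℂ} (hM : M.PosDef)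
    (u v : Fin d → ℂ) :
    ‖star v ⬝ᵥ u‖ ≤ ((star u ⬝ᵥ M *ᵥ u).re + (star v ⬝ᵥ M⁻¹ *ᵥ v).re) / 2 := by
  classical
  set S := CFC.sqrt M with hSdef
  have hS_herm : Sᴴ = S := (CFC.sqrt_nonneg M).posSemidef.1
  have hS2 : S * S = M := CFC.sqrt_mul_sqrt_self M hM.posSemidef.nonneg
  have hdetM : M.det ≠ 0 := hM.det_pos.ne'
  have hdetS : S.det ≠ 0 := by
    intro h
    apply hdetM
    rw [← hS2, Matrix.det_mul, h, mul_zero]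
  have hSunit : IsUnit S.det := hdetS.isUnit
  have hinv : S⁻¹ * S = 1 := Matrix.nonsing_inv_mul S hSunit
  have hSinv_herm : (S⁻¹)ᴴ = S⁻¹ := by
    rw [Matrix.conjTranspose_nonsing_inv, hS_herm]
  have hMi : S⁻¹ * S⁻¹ = M⁻¹ := by
    rw [← hS2, Matrix.mul_inv_rev]
  set x := S⁻¹ *ᵥ v with hx
  set y := S *ᵥ u with hy
  have claim1 : star v ⬝ᵥ u = star x ⬝ᵥ y := by
    rw [hx, hy, star_mulVec, hSinv_herm, dotProduct_mulVec, vecMul_vecMul, hinv,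
      vecMul_one]
  have claimx : star x ⬝ᵥ x = star v ⬝ᵥ M⁻¹ *ᵥ v := by
    rw [hx, star_mulVec, hSinv_herm, dotProduct_mulVec, vecMul_vecMul, hMi,
      ← dotProduct_mulVec]
  have claimy : star y ⬝ᵥ y = star u ⬝ᵥ M *ᵥ u := by
    rw [hy, star_mulVec, hS_herm, dotProduct_mulVec, vecMul_vecMul, hS2,
      ← dotProduct_mulVec]
  set X : EuclideanSpace ℂ (Fin d) := (WithLp.equiv 2 _).symm x
  set Y : EuclideanSpace ℂ (Fin d) := (WithLp.equiv 2 _).symm y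
  have hinner : inner ℂ X Y = star x ⬝ᵥ y := by rw [dotProduct_comm]; rfl
  have hXnorm : ‖X‖ ^ 2 = (star x ⬝ᵥ x).re := by
    rw [dotProduct_comm, ← EuclideanSpace.inner_toLp_toLp x x]
    exact (@inner_self_eq_norm_sq ℂ _ _ _ _ X).symm
  have hYnorm : ‖Y‖ ^ 2 = (star y ⬝ᵥ y).re := by
    rw [dotProduct_comm, ← EuclideanSpace.inner_toLp_toLp y y]
    exact (@inner_self_eq_norm_sq ℂ _ _ _ _ Y).symm
  have hCS : ‖(inner ℂ X Y : ℂ)‖ ≤ ‖X‖ * ‖Y‖ := norm_inner_le_norm X Y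
  rw [claim1, ← hinner, ← claimx, ← claimy, ← hXnorm, ← hYnorm]
  nlinarith [sq_nonneg (‖X‖ - ‖Y‖), hCS, norm_nonneg X, norm_nonneg Y]

lemma iisum' {ι : Type*} (s : Finset ι) {f : ι → ℝ → ℂ} {a b : ℝ}
    (h : ∀ i ∈ s, IntervalIntegrable (f i) MeasureTheory.volume a b) :
    IntervalIntegrable (fun t => ∑ i ∈ s, f i t) MeasureTheory.volume a b := by
  have := IntervalIntegrable.sum s h
  have heq : (∑ i ∈ s, f i) = fun t => ∑ i ∈ s, f i t := by
    funext t; simp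
  rwa [heq] at this

lemma intervalIntegral_re' {a b : ℝ} {f : ℝ → ℂ}
    (hf : IntervalIntegrable f MeasureTheory.volume a b) :
    (∫ t in a..b, f t).re = ∫ t in a..b, (f t).re := by
  have h1 := _root_.integral_re hf.1
  have h2 := _root_.integral_re hf.2
  simp only [RCLike.re_to_complex] at h1 h2
  rw [intervalIntegral, intervalIntegral, Complex.sub_re, h1, h2]

theorem stmt_12 {d : ℕ} (a b : ℝ) (hab : a < b)
    (W : ℝ → Matrix (Fin d) (Fin d) ℂ) (f : ℝ → Fin d → ℂ)
    (hWpd : ∀ t ∈ Set.Icc a b, (W t).PosDef)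
    (hWinv_int : ∀ i j, IntervalIntegrable (fun t => (W t)⁻¹ i j)
      MeasureTheory.volume a b)
    (hf_int : ∀ j, IntervalIntegrable (fun t => f t j) MeasureTheory.volume a b)
    (hQ_int : IntervalIntegrable (fun t => (star (f t) ⬝ᵥ W t *ᵥ f t).re)
      MeasureTheory.volume a b)
    (V : Matrix (Fin d) (Fin d) ℂ)
    (hV : V = Matrix.of fun i j => (((b - a)⁻¹ : ℝ) : ℂ) * ∫ t in a..b, (W t)⁻¹ i j)
    (hVpd : V.PosDef)
    (favg : Fin d → ℂ)
    (hfavg : favg = fun j => (((b - a)⁻¹ : ℝ) : ℂ) * ∫ t in a..b, f t j) :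
    (star favg ⬝ᵥ V⁻¹ *ᵥ favg).re ≤
      (b - a)⁻¹ * ∫ t in a..b, (star (f t) ⬝ᵥ W t *ᵥ f t).re := by
  classical
  have hba : (0:ℝ) < b - a := sub_pos.2 hab
  set k : ℂ := (((b - a)⁻¹ : ℝ) : ℂ) with hk
  have hdetV : V.det ≠ 0 := hVpd.det_pos.ne'
  set e : Fin d → ℂ := V⁻¹ *ᵥ favg with he
  set z : ℂ := star favg ⬝ᵥ V⁻¹ *ᵥ favg with hz
  have hVinv_herm : (V⁻¹)ᴴ = V⁻¹ := by
    rw [Matrix.conjTranspose_nonsing_inv, hVpd.1]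
  have hstar_e : star e = star favg ᵥ* V⁻¹ := by
    rw [he, Matrix.star_mulVec, hVinv_herm]
  have hze : star e ⬝ᵥ favg = z := by
    rw [hstar_e, hz, Matrix.dotProduct_mulVec]
  have hVe : V *ᵥ e = favg := by
    rw [he, Matrix.mulVec_mulVec, Matrix.mul_nonsing_inv V hdetV.isUnit,
      Matrix.one_mulVec]
  have hz_nonneg : (0:ℂ) ≤ z := hVpd.inv.posSemidef.dotProduct_mulVec_nonneg favg
  have hz_re : (0:ℝ) ≤ z.re := (Complex.le_def.1 hz_nonneg).1
  have hz_im : z.im = 0 := ((Complex.le_def.1 hz_nonneg).2).symm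
  have hznorm : ‖z‖ = z.re := by
    have : z = ((z.re : ℝ) : ℂ) := Complex.ext rfl (by simp [hz_im])
    rw [this]
    simp [abs_of_nonneg hz_re]
  -- functions
  set g : ℝ → ℂ := fun t => star e ⬝ᵥ f t with hg
  set A : ℝ → ℝ := fun t => (star (f t) ⬝ᵥ W t *ᵥ f t).re with hA
  set Bc : ℝ → ℂ := fun t => star e ⬝ᵥ (W t)⁻¹ *ᵥ e with hBc
  set B : ℝ → ℝ := fun t => (Bc t).re with hB
  -- integrability
  have hg_eq : g = fun t => ∑ j, star e j * f t j := by
    funext t; rfl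
  have hg_int : IntervalIntegrable g MeasureTheory.volume a b := by
    rw [hg_eq]
    exact iisum' Finset.univ fun j _ => (hf_int j).const_mul _
  have hBc_eq : Bc = fun t => ∑ i, ∑ j, star e i * (W t)⁻¹ i j * e j := by
    funext t
    simp [hBc, dotProduct, Matrix.mulVec, Finset.mul_sum, mul_assoc]
  have hBc_int : IntervalIntegrable Bc MeasureTheory.volume a b := by
    rw [hBc_eq]
    refine iisum' Finset.univ fun i _ => ?_
    exact iisum' Finset.univ fun j _ =>
      ((hWinv_int i j).const_mul _).mul_const _
  have hB_int : IntervalIntegrable B MeasureTheory.volume a b := by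
    have h1 := hBc_int.1.re
    have h2 := hBc_int.2.re
    simp only [RCLike.re_to_complex] at h1 h2
    exact ⟨h1, h2⟩
  have hgnorm_int : IntervalIntegrable (fun t => ‖g t‖) MeasureTheory.volume a b :=
    hg_int.norm
  -- pointwise bound
  have hpt : ∀ t ∈ Set.Icc a b, ‖g t‖ ≤ (A t + B t) / 2 := fun t ht =>
    matrix_cs_key (hWpd t ht) (f t) e
  -- integral bounds
  have hAB_int : IntervalIntegrable (fun t => (A t + B t) / 2)
      MeasureTheory.volume a b := (hQ_int.add hB_int).div_const 2
  have hmono : (∫ t in a..b, ‖g t‖) ≤ ∫ t in a..b, (A t + B t) / 2 :=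
    intervalIntegral.integral_mono_on hab.le hgnorm_int hAB_int hpt
  have hnormint : ‖∫ t in a..b, g t‖ ≤ ∫ t in a..b, ‖g t‖ :=
    intervalIntegral.norm_integral_le_integral_norm hab.le
  have hsplit : (∫ t in a..b, (A t + B t) / 2)
      = ((∫ t in a..b, A t) + ∫ t in a..b, B t) / 2 := by
    rw [intervalIntegral.integral_div, intervalIntegral.integral_add hQ_int hB_int]
  -- averages
  have h_favg : star e ⬝ᵥ favg = k * ∫ t in a..b, g t := by
    have hgi : (∫ t in a..b, g t) = ∑ j, star e j * ∫ t in a..b, f t j := by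
      rw [hg_eq, intervalIntegral.integral_finset_sum fun j _ => (hf_int j).const_mul _]
      exact Finset.sum_congr rfl fun j _ => intervalIntegral.integral_const_mul _ _
    rw [hgi, Finset.mul_sum, hfavg]
    show (∑ j, star e j * (k * ∫ t in a..b, f t j)) = _
    exact Finset.sum_congr rfl fun j _ => by ring
  have h_Bavg : star e ⬝ᵥ V *ᵥ e = k * ∫ t in a..b, Bc t := by
    have hBci : (∫ t in a..b, Bc t)
        = ∑ i, ∑ j, star e i * (∫ t in a..b, (W t)⁻¹ i j) * e j := by
      rw [hBc_eq, intervalIntegral.integral_finset_sum fun i _ =>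
        iisum' Finset.univ fun j _ =>
          ((hWinv_int i j).const_mul _).mul_const _]
      refine Finset.sum_congr rfl fun i _ => ?_
      rw [intervalIntegral.integral_finset_sum fun j _ =>
        ((hWinv_int i j).const_mul _).mul_const _]
      refine Finset.sum_congr rfl fun j _ => ?_
      rw [intervalIntegral.integral_mul_const, intervalIntegral.integral_const_mul]
    have hVee : star e ⬝ᵥ V *ᵥ e = ∑ i, ∑ j, star e i * V i j * e j := by
      simp [dotProduct, Matrix.mulVec, Finset.mul_sum, mul_assoc]
    rw [hVee, hBci, Finset.mul_sum]
    refine Finset.sum_congr rfl fun i _ => ?_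
    rw [Finset.mul_sum]
    refine Finset.sum_congr rfl fun j _ => ?_
    rw [hV]
    show star e i * (k * ∫ t in a..b, (W t)⁻¹ i j) * e j = _
    ring
  -- z = k * ∫ Bc, and z.re = (b-a)⁻¹ * ∫ B
  have hzBc : z = k * ∫ t in a..b, Bc t := by rw [← h_Bavg, hVe, hze]
  have hQre : z.re = (b - a)⁻¹ * ∫ t in a..b, B t := by
    rw [hzBc, hk, Complex.re_ofReal_mul, intervalIntegral_re' hBc_int]
  -- z.re = ‖k * ∫ g‖
  have hXval : z.re = (b - a)⁻¹ * ‖∫ t in a..b, g t‖ := by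
    rw [← hznorm, ← hze, h_favg, norm_mul, hk, Complex.norm_real,
      Real.norm_eq_abs, abs_of_nonneg (le_of_lt (inv_pos.2 hba))]
  have hfinal : z.re ≤ (b - a)⁻¹ * (((∫ t in a..b, A t) + ∫ t in a..b, B t) / 2) := by
    rw [hXval]
    have h := le_trans hnormint (hmono.trans_eq hsplit)
    exact mul_le_mul_of_nonneg_left h (le_of_lt (inv_pos.2 hba))
  have hIB : (b - a)⁻¹ * ∫ t in a..b, B t = z.re := hQre.symm
  show z.re ≤ (b - a)⁻¹ * ∫ t in a..b, A t
  nlinarith [inv_pos.2 hba]
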